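/- In a weakly Markov category, every morphism f : X → Y is equivalent (i.e., in the same orbit under the action of the group C(X,I)) to a unique discardable morphism, namely its normalisation n_f = m_f⁻¹ · f, where m_f = del_Y ∘ f is the mass of f. -/

import Mathlib

open CategoryTheory MonoidalCategory

universe v u

/-- A gs-monoidal category: a symmetric monoidal category in which every
object carries a commutative comonoid structure (copy, discard), compatible
with the monoidal structure. -/
class GSMonoidal (C : Type u) [Category.{v} C] [MonoidalCategory C]
    [SymmetricCategory C] where
  copy : ∀ X : C, X ⟶ X ⊗ X
  del : ∀ X : C, X ⟶ 𝟙_ C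
  copy_del_left : ∀ X : C, copy X ≫ (del X ▷ X) ≫ (λ_ X).hom = 𝟙 X
  copy_del_right : ∀ X : C, copy X ≫ (X ◁ del X) ≫ (ρ_ X).hom = 𝟙 X
  copy_assoc : ∀ X : C,
    copy X ≫ (copy X ▷ X) ≫ (α_ X X X).hom = copy X ≫ (X ◁ copy X)
  copy_comm : ∀ X : C, copy X ≫ (β_ X X).hom = copy X
  copy_tensor : ∀ X Y : C,
    copy (X ⊗ Y) = (copy X ⊗ₘ copy Y) ≫ tensorμ X X Y Y
  del_tensor : ∀ X Y : C, del (X ⊗ Y) = (del X ⊗ₘ del Y) ≫ (λ_ (𝟙_ C)).hom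
  copy_unit : copy (𝟙_ C) = (λ_ (𝟙_ C)).inv
  del_unit : del (𝟙_ C) = 𝟙 (𝟙_ C)

namespace GSMonoidal

variable {C : Type u} [Category.{v} C] [MonoidalCategory C]
  [SymmetricCategory C] [GSMonoidal C]

/-- The convolution product on effects `a b : X ⟶ I`:
`(a, b) ↦ copy_X ≫ (a ⊗ b) ≫ (I ⊗ I ≅ I)`. -/
def emul {X : C} (a b : X ⟶ 𝟙_ C) : X ⟶ 𝟙_ C :=
  copy X ≫ (a ⊗ₘ b) ≫ (λ_ (𝟙_ C)).hom

/-- The action of the effect monoid `C(X, I)` on the hom-set `C(X, Y)`: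
`a · f = copy_X ≫ (a ⊗ f) ≫ (λ_ Y)`. -/
def act {X Y : C} (a : X ⟶ 𝟙_ C) (f : X ⟶ Y) : X ⟶ Y :=
  copy X ≫ (a ⊗ₘ f) ≫ (λ_ Y).hom

lemma act_del {X Y : C} (f : X ⟶ Y) : act (del X) f = f := by
  have h : (del X ⊗ₘ f) = (del X ▷ X) ≫ (𝟙_ C ◁ f) := by
    simp [MonoidalCategory.tensorHom_def]
  rw [act, h]
  slice_lhs 3 4 => rw [MonoidalCategory.leftUnitor_naturality]
  slice_lhs 1 3 => rw [copy_del_left]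
  simp

lemma emul_del_right {X : C} (a : X ⟶ 𝟙_ C) : emul a (del X) = a := by
  have h : (a ⊗ₘ del X) = (X ◁ del X) ≫ (a ▷ 𝟙_ C) := by
    simp [tensorHom_def']
  rw [emul, h]
  slice_lhs 3 4 => rw [MonoidalCategory.unitors_equal,
    MonoidalCategory.rightUnitor_naturality]
  slice_lhs 1 3 => rw [copy_del_right]
  simp

lemma emul_del_left {X : C} (a : X ⟶ 𝟙_ C) : emul (del X) a = a := by
  have h : (del X ⊗ₘ a) = (del X ▷ X) ≫ (𝟙_ C ◁ a) := by
    simp [MonoidalCategory.tensorHom_def]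
  rw [emul, h]
  slice_lhs 3 4 => rw [MonoidalCategory.leftUnitor_naturality]
  slice_lhs 1 3 => rw [copy_del_left]
  simp

lemma act_comp_del {X Y : C} (a : X ⟶ 𝟙_ C) (f : X ⟶ Y) :
    act a f ≫ del Y = emul a (f ≫ del Y) := by
  rw [act, emul]
  slice_lhs 3 4 => rw [← MonoidalCategory.leftUnitor_naturality]
  slice_lhs 2 3 =>
    rw [← MonoidalCategory.id_tensorHom, MonoidalCategory.tensorHom_comp_tensorHom]
  simp

lemma emul_assoc {X : C} (a b c : X ⟶ 𝟙_ C) :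
    emul (emul a b) c = emul a (emul b c) := by
  have coh : (α_ (𝟙_ C) (𝟙_ C) (𝟙_ C)).inv ≫ ((λ_ (𝟙_ C)).hom ▷ 𝟙_ C) ≫
      (λ_ (𝟙_ C)).hom = (𝟙_ C ◁ (λ_ (𝟙_ C)).hom) ≫ (λ_ (𝟙_ C)).hom := by
    monoidal_coherence
  rw [emul, emul, emul, emul]
  rw [tensorHom_def (copy X ≫ (a ⊗ₘ b) ≫ (λ_ (𝟙_ C)).hom) c,
      tensorHom_def' a (copy X ≫ (b ⊗ₘ c) ≫ (λ_ (𝟙_ C)).hom)]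
  simp only [comp_whiskerRight, MonoidalCategory.whiskerLeft_comp, Category.assoc]
  slice_lhs 4 5 => rw [← whisker_exchange]
  slice_rhs 4 5 => rw [whisker_exchange]
  slice_lhs 3 4 => rw [← MonoidalCategory.tensorHom_def]
  slice_rhs 3 4 => rw [← tensorHom_def']
  have hc : copy X ≫ (copy X ▷ X) = copy X ≫ (X ◁ copy X) ≫ (α_ X X X).inv := by
    rw [← cancel_mono (α_ X X X).hom]; simp [copy_assoc]
  slice_lhs 1 2 => rw [hc]
  slice_lhs 3 4 => rw [← associator_inv_naturality]
  simp only [Category.assoc]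
  slice_lhs 4 6 => rw [coh]


end GSMonoidal

/-- A weakly Markov category: a gs-monoidal category in which every effect
monoid `C(X, I)` is a group. -/
class WeaklyMarkov (C : Type u) [Category.{v} C] [MonoidalCategory C]
    [SymmetricCategory C] extends GSMonoidal C where
  einv : ∀ {X : C}, (X ⟶ 𝟙_ C) → (X ⟶ 𝟙_ C)
  emul_einv : ∀ {X : C} (a : X ⟶ 𝟙_ C), GSMonoidal.emul a (einv a) = del X
  einv_emul : ∀ {X : C} (a : X ⟶ 𝟙_ C), GSMonoidal.emul (einv a) a = del X

open GSMonoidal WeaklyMarkov in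
/-- In a weakly Markov category, every morphism `f : X ⟶ Y` is equivalent
(in the same orbit under the action of the group `C(X, I)`) to a unique
discardable morphism, namely its normalisation `n_f = m_f⁻¹ · f`, where
`m_f = del_Y ∘ f` is the mass of `f`. -/
theorem stmt9 {C : Type u} [Category.{v} C] [MonoidalCategory C]
    [SymmetricCategory C] [WeaklyMarkov C] {X Y : C} (f : X ⟶ Y) :
    (act (einv (f ≫ del Y)) f) ≫ del Y = del X ∧
    (∃ a : X ⟶ 𝟙_ C, act a f = act (einv (f ≫ del Y)) f) ∧
    (∀ d : X ⟶ Y, d ≫ del Y = del X → (∃ a : X ⟶ 𝟙_ C, act a f = d) →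
      d = act (einv (f ≫ del Y)) f) := by
  refine ⟨?_, ⟨einv (f ≫ del Y), rfl⟩, ?_⟩
  · rw [act_comp_del, einv_emul]
  · rintro d hd ⟨a, ha⟩
    have hm : emul a (f ≫ del Y) = del X := by
      rw [← act_comp_del, ha, hd]
    have hae : a = einv (f ≫ del Y) := by
      calc a = emul a (del X) := (emul_del_right a).symm
        _ = emul a (emul (f ≫ del Y) (einv (f ≫ del Y))) := by rw [emul_einv]
        _ = emul (emul a (f ≫ del Y)) (einv (f ≫ del Y)) := (emul_assoc _ _ _).symm
        _ = emul (del X) (einv (f ≫ del Y)) := by rw [hm]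
        _ = einv (f ≫ del Y) := emul_del_left _
    rw [← ha, hae]
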